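/- Let γ > 0 and let L : ℝ^m → ℝ be continuous and nonnegative. Then Z(θ) is finite and strictly positive for every θ, F is differentiable on ℝ^m, and its gradient satisfies ∇F(θ) = −γ·(θ − μ(θ)), where μ(θ) is the mean of the probability density p_θ; equivalently, the gradient of the EntropySGD objective −F(θ) equals γ(θ − E_{p_θ}[θ']). -/

import Mathlib

open MeasureTheory

/-- The EntropySGD normalization `Z(θ) = ∫ exp(−L(θ') − (γ/2)‖θ−θ'‖²) dθ'`. -/
noncomputable def entropyZ (m : ℕ) (γ : ℝ) (L : EuclideanSpace ℝ (Fin m) → ℝ)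
    (θ : EuclideanSpace ℝ (Fin m)) : ℝ :=
  ∫ θ' : EuclideanSpace ℝ (Fin m), Real.exp (-L θ' - γ / 2 * ‖θ - θ'‖ ^ 2)

/-- The local-entropy objective `F(θ) = log Z(θ)`. -/
noncomputable def entropyF (m : ℕ) (γ : ℝ) (L : EuclideanSpace ℝ (Fin m) → ℝ)
    (θ : EuclideanSpace ℝ (Fin m)) : ℝ :=
  Real.log (entropyZ m γ L θ)

/-- The probability density `p_θ(θ') = exp(−L(θ') − (γ/2)‖θ−θ'‖²)/Z(θ)`. -/
noncomputable def entropyPdf (m : ℕ) (γ : ℝ) (L : EuclideanSpace ℝ (Fin m) → ℝ)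
    (θ θ' : EuclideanSpace ℝ (Fin m)) : ℝ :=
  Real.exp (-L θ' - γ / 2 * ‖θ - θ'‖ ^ 2) / entropyZ m γ L θ

/-- The mean `μ(θ) = ∫ θ' p_θ(θ') dθ'` of the density `p_θ`. -/
noncomputable def entropyMean (m : ℕ) (γ : ℝ) (L : EuclideanSpace ℝ (Fin m) → ℝ)
    (θ : EuclideanSpace ℝ (Fin m)) : EuclideanSpace ℝ (Fin m) :=
  ∫ θ' : EuclideanSpace ℝ (Fin m), entropyPdf m γ L θ θ' • θ'


section Aux

variable {m : ℕ}

local notation "E" => EuclideanSpace ℝ (Fin m)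

lemma gauss_int {b : ℝ} (hb : 0 < b) :
    Integrable (fun v : E => Real.exp (-b * ‖v‖ ^ 2)) := by
  have h := (GaussianFourier.integrable_cexp_neg_mul_sq_norm_add (V := E)
      (b := (b : ℂ)) (by simpa using hb) 0 0).norm
  refine h.congr (Filter.Eventually.of_forall fun v => ?_)
  simp only [Complex.norm_exp]
  norm_num
  left
  norm_cast

lemma norm_gauss_int {b : ℝ} (hb : 0 < b) :
    Integrable (fun v : E => ‖v‖ * Real.exp (-b * ‖v‖ ^ 2)) := by
  have key : ∀ v : E, ‖v‖ * Real.exp (-b * ‖v‖ ^ 2)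
      ≤ (1 + 2 / b) * Real.exp (-(b / 2) * ‖v‖ ^ 2) := by
    intro v
    set t := ‖v‖ with ht
    have ht0 : 0 ≤ t := norm_nonneg v
    have h1 : t ≤ (1 + 2 / b) * Real.exp (b / 2 * t ^ 2) := by
      have e1 : b / 2 * t ^ 2 ≤ Real.exp (b / 2 * t ^ 2) := (Real.add_one_le_exp _).trans' (by linarith)
      have e2 : (1 : ℝ) ≤ Real.exp (b / 2 * t ^ 2) := Real.one_le_exp (by positivity)
      have : t ≤ 1 + t ^ 2 := by nlinarith
      have : t ^ 2 ≤ (2 / b) * Real.exp (b / 2 * t ^ 2) := by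
        rw [div_mul_eq_mul_div, le_div_iff₀ hb]
        nlinarith
      nlinarith
    have hsplit : Real.exp (-b * t ^ 2)
        = Real.exp (-(b / 2) * t ^ 2) * Real.exp (-(b / 2) * t ^ 2) := by
      rw [← Real.exp_add]; ring_nf
    rw [hsplit, ← mul_assoc]
    have h2 : t * Real.exp (-(b / 2) * t ^ 2) ≤ 1 + 2 / b := by
      rw [show -(b / 2) * t ^ 2 = -(b / 2 * t ^ 2) by ring, Real.exp_neg,
        mul_inv_le_iff₀ (Real.exp_pos _)]
      linarith [h1]
    have := Real.exp_pos (-(b / 2) * t ^ 2)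
    nlinarith [Real.exp_nonneg (-(b / 2) * t ^ 2)]
  refine (gauss_int (b := b / 2) (by positivity)).const_mul (1 + 2 / b) |>.mono'
    ?_ (Filter.Eventually.of_forall fun v => ?_)
  · exact (continuous_norm.mul (by fun_prop)).aestronglyMeasurable
  · rw [Real.norm_of_nonneg (by positivity)]
    exact key v

lemma gauss_shift {b : ℝ} (hb : 0 < b) (θ : E) :
    Integrable (fun v : E => Real.exp (-b * ‖θ - v‖ ^ 2)) :=
  (gauss_int hb).comp_sub_left θ

lemma norm_gauss_shift {b : ℝ} (hb : 0 < b) (θ : E) :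
    Integrable (fun v : E => ‖θ - v‖ * Real.exp (-b * ‖θ - v‖ ^ 2)) :=
  (norm_gauss_int hb).comp_sub_left θ

end Aux

section Main

variable {m : ℕ}
local notation "E" => EuclideanSpace ℝ (Fin m)

lemma exp_le_aux {γ La t : ℝ} (hLa : 0 ≤ La) :
    Real.exp (-La - γ / 2 * t ^ 2) ≤ Real.exp (-(γ / 2) * t ^ 2) :=
  Real.exp_le_exp.2 (by nlinarith)

lemma main_int (γ : ℝ) (hγ : 0 < γ) (L : E → ℝ) (hLc : Continuous L)
    (hLnn : ∀ θ', 0 ≤ L θ') (θ : E) :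
    Integrable (fun a : E => Real.exp (-L a - γ / 2 * ‖θ - a‖ ^ 2)) := by
  refine (gauss_shift (b := γ / 2) (by positivity) θ).mono'
    (Continuous.aestronglyMeasurable (by fun_prop)) (.of_forall fun a => ?_)
  rw [Real.norm_of_nonneg (Real.exp_nonneg _)]
  exact exp_le_aux (hLnn a)

lemma main_int_smul (γ : ℝ) (hγ : 0 < γ) (L : E → ℝ) (hLc : Continuous L)
    (hLnn : ∀ θ', 0 ≤ L θ') (θ : E) :
    Integrable (fun a : E => Real.exp (-L a - γ / 2 * ‖θ - a‖ ^ 2) • a) := by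
  have hb : Integrable (fun a : E => ‖θ - a‖ * Real.exp (-(γ / 2) * ‖θ - a‖ ^ 2)
      + ‖θ‖ * Real.exp (-(γ / 2) * ‖θ - a‖ ^ 2)) :=
    (norm_gauss_shift (by positivity) θ).add
      ((gauss_shift (by positivity) θ).const_mul ‖θ‖)
  refine hb.mono' (Continuous.aestronglyMeasurable (by fun_prop))
    (.of_forall fun a => ?_)
  rw [norm_smul, Real.norm_of_nonneg (Real.exp_nonneg _)]
  have h1 := exp_le_aux (γ := γ) (t := ‖θ - a‖) (hLnn a)
  have h2 : ‖a‖ ≤ ‖θ - a‖ + ‖θ‖ := by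
    calc ‖a‖ = ‖θ - (θ - a)‖ := by rw [sub_sub_cancel]
    _ ≤ ‖θ‖ + ‖θ - a‖ := norm_sub_le _ _
    _ = ‖θ - a‖ + ‖θ‖ := by ring
  have e1 := Real.exp_nonneg (-L a - γ / 2 * ‖θ - a‖ ^ 2)
  have e2 := Real.exp_nonneg (-(γ / 2) * ‖θ - a‖ ^ 2)
  have n1 := norm_nonneg a
  have n2 := norm_nonneg (θ - a)
  have n3 := norm_nonneg θ
  nlinarith [mul_le_mul h1 h2 n1 e2]


lemma Zpos (γ : ℝ) (hγ : 0 < γ) (L : E → ℝ) (hLc : Continuous L)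
    (hLnn : ∀ θ', 0 ≤ L θ') (θ : E) : 0 < entropyZ m γ L θ := by
  rw [entropyZ, integral_pos_iff_support_of_nonneg
    (fun a => Real.exp_nonneg _) (main_int γ hγ L hLc hLnn θ)]
  have : (Function.support fun a : E => Real.exp (-L a - γ / 2 * ‖θ - a‖ ^ 2))
      = Set.univ := Set.eq_univ_of_forall fun a => Real.exp_ne_zero _
  rw [this]
  exact isOpen_univ.measure_pos volume Set.univ_nonempty


lemma Fprime_deriv (γ : ℝ) (L : E → ℝ) (a x : E) :
    HasFDerivAt (fun x : E => Real.exp (-L a - γ / 2 * ‖x - a‖ ^ 2))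
      (innerSL ℝ (((-γ) * Real.exp (-L a - γ / 2 * ‖x - a‖ ^ 2)) • (x - a))) x := by
  have h1 : HasFDerivAt (fun x : E => ‖x - a‖ ^ 2)
      (2 • (innerSL ℝ (x - a)).comp (ContinuousLinearMap.id ℝ E)) x :=
    ((hasFDerivAt_id x).sub_const a).norm_sq
  have h2 := ((h1.const_mul (γ / 2)).const_sub (-L a)).exp
  refine h2.congr_fderiv ?_
  ext y
  simp only [innerSL_apply_apply, real_inner_smul_left, ContinuousLinearMap.smul_apply,
    ContinuousLinearMap.neg_apply, ContinuousLinearMap.comp_apply,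
    ContinuousLinearMap.coe_id', id_eq, smul_eq_mul, ContinuousLinearMap.coe_smul',
    Pi.smul_apply, nsmul_eq_mul, Nat.cast_ofNat]
  ring

set_option synthInstance.maxHeartbeats 1000000 in
set_option maxHeartbeats 1000000 in
lemma Zderiv (γ : ℝ) (hγ : 0 < γ) (L : E → ℝ) (hLc : Continuous L)
    (hLnn : ∀ θ', 0 ≤ L θ') (θ : E) :
    HasFDerivAt (entropyZ m γ L)
      (∫ a : E, innerSL ℝ
        (((-γ) * Real.exp (-L a - γ / 2 * ‖θ - a‖ ^ 2)) • (θ - a))) θ := by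
  have hbi : Integrable (fun a : E => γ * Real.exp (γ / 2)
      * Real.exp (-(γ / 4) * ‖θ - a‖ ^ 2)
      + γ * Real.exp (γ / 2) * (‖θ - a‖ * Real.exp (-(γ / 4) * ‖θ - a‖ ^ 2))) :=
    ((gauss_shift (by positivity) θ).const_mul _).add
      ((norm_gauss_shift (by positivity) θ).const_mul _)
  refine hasFDerivAt_integral_of_dominated_of_fderiv_le (𝕜 := ℝ)
    (F := fun x a => Real.exp (-L a - γ / 2 * ‖x - a‖ ^ 2))
    (F' := fun x a => innerSL ℝ (((-γ) * Real.exp (-L a - γ / 2 * ‖x - a‖ ^ 2)) • (x - a)))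
    (bound := fun a => γ * Real.exp (γ / 2) * Real.exp (-(γ / 4) * ‖θ - a‖ ^ 2)
      + γ * Real.exp (γ / 2) * (‖θ - a‖ * Real.exp (-(γ / 4) * ‖θ - a‖ ^ 2)))
    (Metric.ball_mem_nhds θ one_pos) (.of_forall fun x => Continuous.aestronglyMeasurable (by fun_prop))
    (main_int γ hγ L hLc hLnn θ) ?_ (.of_forall fun a x hx => ?_) hbi
    (.of_forall fun a x _ => Fprime_deriv γ L a x)
  · exact ((innerSL ℝ).continuous.comp (by fun_prop)).aestronglyMeasurable
  · have hn : ‖innerSL ℝ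
        (((-γ) * Real.exp (-L a - γ / 2 * ‖x - a‖ ^ 2)) • ((x : E) - a))‖
        = γ * Real.exp (-L a - γ / 2 * ‖x - a‖ ^ 2) * ‖x - a‖ := by
      rw [innerSL_apply_norm, norm_smul, Real.norm_eq_abs, abs_mul, abs_neg,
        abs_of_pos hγ, Real.abs_exp, mul_assoc]
    rw [hn]
    set s := ‖x - a‖ with hs
    set t := ‖θ - a‖ with ht
    have hs0 : 0 ≤ s := norm_nonneg _
    have ht0 : 0 ≤ t := norm_nonneg _
    have hxθ : ‖x - θ‖ < 1 := by
      have := Metric.mem_ball.1 hx; rwa [dist_eq_norm] at this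
    have hst : s ≤ 1 + t := by
      have h := norm_sub_le_norm_sub_add_norm_sub x θ a
      rw [← hs, ← ht] at h; linarith
    have hts : t ≤ 1 + s := by
      have h := norm_sub_le_norm_sub_add_norm_sub θ x a
      rw [← hs, ← ht] at h
      have : ‖θ - x‖ = ‖x - θ‖ := norm_sub_rev θ x
      linarith
    have hexp : Real.exp (-L a - γ / 2 * s ^ 2)
        ≤ Real.exp (γ / 2) * Real.exp (-(γ / 4) * t ^ 2) := by
      rw [← Real.exp_add]
      refine Real.exp_le_exp.2 ?_
      have hLa := hLnn a
      have htsq : t ^ 2 ≤ (1 + s) ^ 2 := by nlinarith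
      nlinarith [mul_le_mul_of_nonneg_left htsq (by positivity : (0:ℝ) ≤ γ / 4),
        mul_nonneg hγ.le (sq_nonneg (s - 1))]
    have e2 : (0:ℝ) ≤ Real.exp (γ / 2) * Real.exp (-(γ / 4) * t ^ 2) := by positivity
    nlinarith [mul_le_mul hexp hst hs0 e2, Real.exp_nonneg (-L a - γ / 2 * s ^ 2),
      mul_nonneg (Real.exp_nonneg (γ / 2)) (Real.exp_nonneg (-(γ / 4) * t ^ 2))]


set_option synthInstance.maxHeartbeats 1000000 in
set_option maxHeartbeats 1000000 in
lemma entropy_grad (γ : ℝ) (hγ : 0 < γ) (L : E → ℝ) (hLc : Continuous L)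
    (hLnn : ∀ θ', 0 ≤ L θ') (θ : E) :
    HasGradientAt (entropyF m γ L) ((-γ) • (θ - entropyMean m γ L θ)) θ := by
  have hZpos := Zpos γ hγ L hLc hLnn θ
  have hD := Zderiv γ hγ L hLc hLnn θ
  have hI1 := main_int γ hγ L hLc hLnn θ
  have hI2 := main_int_smul γ hγ L hLc hLnn θ
  have hfun : (fun a : E => ((-γ) * Real.exp (-L a - γ / 2 * ‖θ - a‖ ^ 2)) • (θ - a))
      = fun a : E => (-γ) • (Real.exp (-L a - γ / 2 * ‖θ - a‖ ^ 2) • θ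
        - Real.exp (-L a - γ / 2 * ‖θ - a‖ ^ 2) • a) := by
    funext a
    rw [mul_smul, smul_sub]
  have hw_int : Integrable (fun a : E =>
      ((-γ) * Real.exp (-L a - γ / 2 * ‖θ - a‖ ^ 2)) • (θ - a)) := by
    rw [hfun]
    exact ((hI1.smul_const θ).sub hI2).smul (-γ)
  have hG : (∫ a : E, innerSL ℝ (((-γ) * Real.exp (-L a - γ / 2 * ‖θ - a‖ ^ 2)) • (θ - a)))
      = innerSL ℝ (∫ a : E, ((-γ) * Real.exp (-L a - γ / 2 * ‖θ - a‖ ^ 2)) • (θ - a)) :=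
    ContinuousLinearMap.integral_comp_comm _ hw_int
  have hmean : entropyMean m γ L θ
      = (entropyZ m γ L θ)⁻¹ • ∫ a : E, Real.exp (-L a - γ / 2 * ‖θ - a‖ ^ 2) • a := by
    rw [entropyMean]
    simp_rw [entropyPdf, div_eq_inv_mul, mul_smul]
    rw [integral_smul]
  have hwval : (∫ a : E, ((-γ) * Real.exp (-L a - γ / 2 * ‖θ - a‖ ^ 2)) • (θ - a))
      = (entropyZ m γ L θ) • ((-γ) • (θ - entropyMean m γ L θ)) := by
    rw [hfun, integral_smul, integral_sub (hI1.smul_const θ) hI2, integral_smul_const,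
      hmean, smul_comm (entropyZ m γ L θ) (-γ), smul_sub (entropyZ m γ L θ),
      smul_inv_smul₀ hZpos.ne']
    rfl
  rw [hasGradientAt_iff_hasFDerivAt]
  have hlog := hD.log hZpos.ne'
  have : (InnerProductSpace.toDual ℝ E) ((-γ) • (θ - entropyMean m γ L θ))
      = (entropyZ m γ L θ)⁻¹
        • ∫ a : E, innerSL ℝ (((-γ) * Real.exp (-L a - γ / 2 * ‖θ - a‖ ^ 2)) • (θ - a)) := by
    rw [hG, hwval]
    ext y
    simp only [InnerProductSpace.toDual_apply_apply, ContinuousLinearMap.smul_apply,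
      innerSL_apply_apply, real_inner_smul_left]
    rw [smul_eq_mul, ← mul_assoc, ← mul_assoc, inv_mul_cancel₀ hZpos.ne', one_mul]
  rw [this]
  exact hlog

end Main

/-- For `γ > 0` and `L` continuous and nonnegative, `Z(θ)` is finite
(the integrand is integrable) and strictly positive for every `θ`, and `F` is
differentiable with `∇F(θ) = −γ·(θ − μ(θ))`. -/
theorem entropySGD_gradient (m : ℕ) (γ : ℝ) (hγ : 0 < γ)
    (L : EuclideanSpace ℝ (Fin m) → ℝ) (hLc : Continuous L) (hLnn : ∀ θ', 0 ≤ L θ') :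
    (∀ θ : EuclideanSpace ℝ (Fin m),
      Integrable (fun θ' : EuclideanSpace ℝ (Fin m) =>
        Real.exp (-L θ' - γ / 2 * ‖θ - θ'‖ ^ 2))) ∧
    (∀ θ : EuclideanSpace ℝ (Fin m), 0 < entropyZ m γ L θ) ∧
    (∀ θ : EuclideanSpace ℝ (Fin m),
      HasGradientAt (entropyF m γ L) ((-γ) • (θ - entropyMean m γ L θ)) θ) :=
  ⟨fun θ => main_int γ hγ L hLc hLnn θ, fun θ => Zpos γ hγ L hLc hLnn θ,
    fun θ => entropy_grad γ hγ L hLc hLnn θ⟩
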